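/- Let E be a finite set of parallel edges from s to t, each edge e with a nonnegative, nondecreasing cost function c_e : ℝ≥0 → ℝ≥0. Let r > 0 and δ > 0. Let f be an equilibrium flow of rate r: f_e ≥ 0, Σ_e f_e = r, and there exists L ≥ 0 with c_e(f_e) = L whenever f_e > 0 and c_e(f_e) ≥ L for all e. Let f* be any flow of rate (1+δ)r: f*_e ≥ 0, Σ_e f*_e = (1+δ)r. Then Σ_e c_e(f*_e)·f*_e ≥ δ · Σ_e c_e(f_e)·f_e. -/
import Mathlib


/-- Resource augmentation for selfish routing on parallel edges: an
equilibrium flow `f` of rate `r` has cost at most `1/δ` times the cost of any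
flow `f'` of rate `(1+δ)r`. -/
theorem equilibrium_cost_le_augmented_opt
    {E : Type} [Fintype E] (c : E → ℝ → ℝ)
    (hnonneg : ∀ e x, 0 ≤ x → 0 ≤ c e x)
    (hmono : ∀ e x y, 0 ≤ x → x ≤ y → c e x ≤ c e y)
    (r δ : ℝ) (hr : 0 < r) (hδ : 0 < δ)
    (f f' : E → ℝ) (L : ℝ) (hL : 0 ≤ L)
    (hf_nonneg : ∀ e, 0 ≤ f e) (hf_rate : ∑ e, f e = r)
    (heq_used : ∀ e, 0 < f e → c e (f e) = L)
    (heq_all : ∀ e, L ≤ c e (f e))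
    (hf'_nonneg : ∀ e, 0 ≤ f' e) (hf'_rate : ∑ e, f' e = (1 + δ) * r) :
    δ * ∑ e, c e (f e) * f e ≤ ∑ e, c e (f' e) * f' e := by
  have hcf : ∀ e, c e (f e) * f e = L * f e := by
    intro e
    rcases lt_or_eq_of_le (hf_nonneg e) with h | h
    · rw [heq_used e h]
    · rw [← h, mul_zero, mul_zero]
  have key : ∀ e, L * (f' e - f e) ≤ c e (f' e) * f' e := by
    intro e
    rcases le_or_gt (f e) (f' e) with h | h
    · have h1 : L ≤ c e (f' e) := (heq_all e).trans (hmono e _ _ (hf_nonneg e) h)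
      have : L * (f' e - f e) ≤ L * f' e := by nlinarith [hf_nonneg e]
      refine this.trans ?_
      exact mul_le_mul_of_nonneg_right h1 (hf'_nonneg e)
    · have h1 : L * (f' e - f e) ≤ 0 := mul_nonpos_of_nonneg_of_nonpos hL (by linarith)
      exact h1.trans (mul_nonneg (hnonneg e _ (hf'_nonneg e)) (hf'_nonneg e))
  have hsum : ∑ e, L * (f' e - f e) ≤ ∑ e, c e (f' e) * f' e :=
    Finset.sum_le_sum fun e _ => key e
  have h2 : ∑ e, L * (f' e - f e) = L * (δ * r) := by
    rw [← Finset.mul_sum, Finset.sum_sub_distrib, hf_rate, hf'_rate]; ring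
  have h3 : ∑ e, c e (f e) * f e = L * r := by
    rw [Finset.sum_congr rfl fun e _ => hcf e, ← Finset.mul_sum, hf_rate]
  rw [h3]; nlinarith [hsum, h2]
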